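/- Define R_k(x) := 2P_k(x) − 4(−1)^k(2k+1)x with P_k given by T_{2k}(t)=(−1)^k+P_k(t²). For every nonnegative integer k and every t ∈ (0,1], |R_k(t²)|/t ≤ 4(2k+1)t + 4·∑_{j=1}^{k} min{1, (2j−1)t}. -/

import Mathlib

open Polynomial Polynomial.Chebyshev Real

lemma cos_odd_bound (n : ℕ) (θ : ℝ) (h0 : 0 ≤ θ) (h1 : θ ≤ π / 2) :
    |Real.cos ((2 * n + 1) * θ)| ≤ (2 * n + 1) * Real.cos θ := by
  induction n with
  | zero =>
      simp only [Nat.cast_zero, mul_zero, zero_add, one_mul]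
      rw [abs_of_nonneg (Real.cos_nonneg_of_mem_Icc ⟨by linarith [Real.pi_div_two_pos], h1⟩)]
  | succ n ih =>
      have hc : Real.cos θ ≥ 0 :=
        Real.cos_nonneg_of_mem_Icc ⟨by linarith [Real.pi_div_two_pos], h1⟩
      have h2θ : |Real.sin (2 * θ)| ≤ 2 * Real.cos θ := by
        rw [Real.sin_two_mul, abs_mul, abs_mul]
        rw [abs_of_nonneg (by norm_num : (0:ℝ) ≤ 2),
          abs_of_nonneg (Real.sin_nonneg_of_nonneg_of_le_pi h0 (by linarith [Real.pi_div_two_pos])),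
          abs_of_nonneg hc]
        nlinarith [Real.sin_le_one θ, hc]
      have key : (2 * (n + 1 : ℕ) + 1 : ℝ) * θ = (2 * n + 1) * θ + 2 * θ := by
        push_cast; ring
      rw [key, Real.cos_add]
      calc |Real.cos ((2 * n + 1) * θ) * Real.cos (2 * θ) -
              Real.sin ((2 * n + 1) * θ) * Real.sin (2 * θ)|
          ≤ |Real.cos ((2 * n + 1) * θ)| * |Real.cos (2 * θ)| +
              |Real.sin ((2 * n + 1) * θ)| * |Real.sin (2 * θ)| := by
            rw [← abs_mul, ← abs_mul]; exact abs_sub _ _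
        _ ≤ |Real.cos ((2 * n + 1) * θ)| * 1 + 1 * (2 * Real.cos θ) := by
            gcongr
            · exact Real.abs_cos_le_one _
            · exact Real.abs_sin_le_one _
        _ ≤ (2 * (n + 1 : ℕ) + 1) * Real.cos θ := by
            push_cast; nlinarith [ih]

lemma T_odd_bound (n : ℕ) (t : ℝ) (ht0 : 0 ≤ t) (ht1 : t ≤ 1) :
    |(Polynomial.Chebyshev.T ℝ (2 * n + 1)).eval t| ≤ min 1 ((2 * n + 1) * t) := by
  have h1 : t = Real.cos (Real.arccos t) := (Real.cos_arccos (by linarith) ht1).symm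
  set θ := Real.arccos t with hθ
  have hθ0 : 0 ≤ θ := Real.arccos_nonneg t
  have hθ1 : θ ≤ π / 2 := (Real.arccos_le_pi_div_two).2 ht0
  rw [h1, Polynomial.Chebyshev.T_real_cos]
  refine le_min (Real.abs_cos_le_one _) ?_
  have := cos_odd_bound n θ hθ0 hθ1
  have hcast : ((2 * n + 1 : ℤ) : ℝ) = (2 * (n : ℝ) + 1) := by push_cast; ring
  rw [hcast]
  exact this

lemma aux_bound (k : ℕ) (t : ℝ) (ht0 : 0 < t) (ht1 : t ≤ 1) :
    |2 * (Polynomial.Chebyshev.T ℝ (2 * k)).eval t - 2 * (-1 : ℝ) ^ k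
        - 4 * (-1 : ℝ) ^ k * (2 * k + 1) * t ^ 2| ≤
      t * (4 * (2 * k + 1) * t + 4 * ∑ j ∈ Finset.Icc 1 k, min 1 ((2 * (j : ℝ) - 1) * t)) := by
  induction k with
  | zero =>
      simp only [Nat.cast_zero, mul_zero, pow_zero, Finset.Icc_self]
      norm_num
      nlinarith
  | succ k ih =>
      have hrec : (Polynomial.Chebyshev.T ℝ (2 * (k + 1 : ℕ))).eval t =
          2 * t * (Polynomial.Chebyshev.T ℝ (2 * k + 1)).eval t
            - (Polynomial.Chebyshev.T ℝ (2 * k)).eval t := by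
        have h := Polynomial.Chebyshev.T_add_two ℝ (2 * (k : ℤ))
        push_cast
        rw [show (2 * ((k:ℤ) + 1)) = 2 * (k:ℤ) + 2 by ring, h]
        simp [mul_comm]
      set a := (Polynomial.Chebyshev.T ℝ (2 * k)).eval t
      set b := (Polynomial.Chebyshev.T ℝ (2 * k + 1)).eval t
      have hb : |b| ≤ min 1 ((2 * (k:ℝ) + 1) * t) := T_odd_bound k t ht0.le ht1
      have hkey : 2 * (Polynomial.Chebyshev.T ℝ (2 * (k + 1 : ℕ))).eval t
            - 2 * (-1 : ℝ) ^ (k + 1) - 4 * (-1 : ℝ) ^ (k + 1) * (2 * (k + 1 : ℕ) + 1) * t ^ 2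
          = -(2 * a - 2 * (-1 : ℝ) ^ k - 4 * (-1 : ℝ) ^ k * (2 * k + 1) * t ^ 2)
            + 4 * t * b + (-1 : ℝ) ^ k * 8 * t ^ 2 := by
        rw [hrec]; push_cast; ring
      rw [hkey]
      have habs : |(-(2 * a - 2 * (-1 : ℝ) ^ k - 4 * (-1 : ℝ) ^ k * (2 * k + 1) * t ^ 2))
            + 4 * t * b + (-1 : ℝ) ^ k * 8 * t ^ 2|
          ≤ |2 * a - 2 * (-1 : ℝ) ^ k - 4 * (-1 : ℝ) ^ k * (2 * k + 1) * t ^ 2|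
            + 4 * t * |b| + 8 * t ^ 2 := by
        calc _ ≤ |(-(2 * a - 2 * (-1 : ℝ) ^ k - 4 * (-1 : ℝ) ^ k * (2 * k + 1) * t ^ 2))
              + 4 * t * b| + |(-1 : ℝ) ^ k * 8 * t ^ 2| := abs_add_le _ _
          _ ≤ |(-(2 * a - 2 * (-1 : ℝ) ^ k - 4 * (-1 : ℝ) ^ k * (2 * k + 1) * t ^ 2))|
              + |4 * t * b| + |(-1 : ℝ) ^ k * 8 * t ^ 2| := by gcongr; exact abs_add_le _ _
          _ = _ := by
              rw [abs_neg, abs_mul, abs_mul, abs_mul, abs_mul,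
                abs_of_nonneg (by norm_num : (0:ℝ) ≤ 4), abs_of_nonneg ht0.le,
                abs_pow, abs_neg, abs_one, one_pow, one_mul,
                abs_of_nonneg (by norm_num : (0:ℝ) ≤ 8),
                abs_of_nonneg (by positivity : (0:ℝ) ≤ t ^ 2)]
      refine habs.trans ?_
      have hsum : ∑ j ∈ Finset.Icc 1 (k + 1), min 1 ((2 * (j : ℝ) - 1) * t)
          = ∑ j ∈ Finset.Icc 1 k, min 1 ((2 * (j : ℝ) - 1) * t)
            + min 1 ((2 * ((k:ℝ) + 1) - 1) * t) := by
        rw [Finset.sum_Icc_succ_top (by omega : 1 ≤ k + 1)]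
        congr 2
        push_cast; ring
      have hb' : |b| ≤ min 1 ((2 * ((k:ℝ) + 1) - 1) * t) := by
        convert hb using 3; ring
      push_cast
      rw [hsum]
      have hmin : min 1 ((2 * ((k:ℝ) + 1) - 1) * t) ≥ 0 := by
        refine le_min (by norm_num) (by nlinarith)
      nlinarith [ih, mul_le_mul_of_nonneg_left hb' (by linarith : (0:ℝ) ≤ 4 * t)]

theorem stmt8 (k : ℕ) (Pk : Polynomial ℝ)
    (hPk : ∀ t : ℝ, (Polynomial.Chebyshev.T ℝ (2 * k)).eval t = (-1 : ℝ) ^ k + Pk.eval (t ^ 2))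
    (t : ℝ) (ht0 : 0 < t) (ht1 : t ≤ 1) :
    |2 * Pk.eval (t ^ 2) - 4 * (-1 : ℝ) ^ k * (2 * k + 1) * t ^ 2| / t ≤
      4 * (2 * k + 1) * t + 4 * ∑ j ∈ Finset.Icc 1 k, min 1 ((2 * (j : ℝ) - 1) * t) := by
  rw [div_le_iff₀ ht0]
  have hP : Pk.eval (t ^ 2) = (Polynomial.Chebyshev.T ℝ (2 * k)).eval t - (-1 : ℝ) ^ k := by
    rw [hPk t]; ring
  have hg : |2 * Pk.eval (t ^ 2) - 4 * (-1 : ℝ) ^ k * (2 * k + 1) * t ^ 2|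
      = |2 * (Polynomial.Chebyshev.T ℝ (2 * k)).eval t - 2 * (-1 : ℝ) ^ k
        - 4 * (-1 : ℝ) ^ k * (2 * k + 1) * t ^ 2| := by
    rw [hP]; ring_nf
  rw [hg]
  exact (aux_bound k t ht0 ht1).trans_eq (mul_comm _ _)
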